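/- arXiv:1801.05859 — 3 statements merged into one kernel-verified Lean document; each statement's English description precedes it below -/
import Mathlib

section
/- Kotel'nikov representation theorem (complex-baseband form). Let 0 ≤ f₁ < f₂ and let f : ℝ → ℝ be continuous and integrable, with integrable Fourier transform 𝓕f, and suppose that 𝓕f(ξ) = 0 whenever |ξ| < f₁ or |ξ| > f₂. Then there exists an integrable function G : ℝ → ℂ vanishing outside the interval [−(f₂−f₁)/2, (f₂−f₁)/2] such that, setting S := 𝓕⁻G (the inverse Fourier integral of G), one has f(t) = Re( S(t) · exp(2πi·((f₁+f₂)/2)·t) ) for every t ∈ ℝ. -/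
open MeasureTheory Real Complex
open scoped FourierTransform

private lemma fourierInv_apply' (g : ℝ → ℂ) (t : ℝ) :
    𝓕⁻ g t = ∫ ξ : ℝ, Complex.exp (2 * π * ξ * t * Complex.I) * g ξ := by
  rw [Real.fourierInv_eq_fourier_neg,
    Real.fourier_real_eq_integral_exp_smul]
  congr 1; ext ξ
  rw [smul_eq_mul]
  congr 2
  push_cast; ring

private lemma fourier_real_conj (f : ℝ → ℝ) (ξ : ℝ) :
    (starRingEnd ℂ) (𝓕 (fun t : ℝ => (f t : ℂ)) (-ξ)) = 𝓕 (fun t : ℝ => (f t : ℂ)) ξ := by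
  rw [Real.fourier_real_eq_integral_exp_smul,
    Real.fourier_real_eq_integral_exp_smul, ← integral_conj]
  congr 1; ext v
  rw [smul_eq_mul, smul_eq_mul, map_mul, ← Complex.exp_conj, Complex.conj_ofReal]
  congr 1
  rw [map_mul, Complex.conj_I, Complex.conj_ofReal]
  push_cast; ring

private lemma norm_exp_I_eq_one (r : ℝ) :
    ‖Complex.exp ((r : ℂ) * Complex.I)‖ = 1 := by
  rw [Complex.norm_exp]
  simp

/-- **Kotel'nikov representation theorem (complex-baseband form).**
If a real signal `f` is continuous, integrable, has integrable Fourier transform, and its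
Fourier transform vanishes outside the band `f₁ ≤ |ξ| ≤ f₂`, then `f` is the real part of a
complex baseband signal (the inverse Fourier integral of an integrable `G` supported in
`[-(f₂-f₁)/2, (f₂-f₁)/2]`) modulated by the carrier frequency `(f₁+f₂)/2`. -/
theorem kotelnikov_complex_baseband
    (f₁ f₂ : ℝ) (hf₁ : 0 ≤ f₁) (h₁₂ : f₁ < f₂)
    (f : ℝ → ℝ) (hcont : Continuous f)
    (hint : Integrable f)
    (hFint : Integrable (𝓕 (fun t : ℝ => (f t : ℂ))))
    (hband : ∀ ξ : ℝ, (|ξ| < f₁ ∨ |ξ| > f₂) → 𝓕 (fun t : ℝ => (f t : ℂ)) ξ = 0) :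
    ∃ G : ℝ → ℂ, Integrable G ∧
      (∀ ξ : ℝ, ξ ∉ Set.Icc (-((f₂ - f₁) / 2)) ((f₂ - f₁) / 2) → G ξ = 0) ∧
      (∀ t : ℝ,
        f t = ((𝓕⁻ G) t *
          Complex.exp (2 * Real.pi * Complex.I * (((f₁ + f₂) / 2 : ℝ) : ℂ) * (t : ℂ))).re) := by
  set F : ℝ → ℂ := 𝓕 (fun t : ℝ => (f t : ℂ)) with hF
  set fc : ℝ := (f₁ + f₂) / 2 with hfc
  set B2 : ℝ := (f₂ - f₁) / 2 with hB2
  set G : ℝ → ℂ := (Set.Icc (-B2) B2).indicator (fun ν => 2 * F (ν + fc)) with hG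
  have hGint : Integrable G :=
    ((hFint.comp_add_right fc).const_mul 2).indicator measurableSet_Icc
  refine ⟨G, hGint, fun ξ hξ => Set.indicator_of_notMem hξ _, fun t => ?_⟩
  set P : ℝ → ℂ := (Set.Icc f₁ f₂).indicator F with hP
  set N : ℝ → ℂ := (Set.Icc (-f₂) (-f₁)).indicator F with hN
  set e : ℝ → ℂ := fun ξ => Complex.exp (2 * π * ξ * t * Complex.I) with he
  have hPint : Integrable P := hFint.indicator measurableSet_Icc
  have hNint : Integrable N := hFint.indicator measurableSet_Icc
  have hemeas : AEStronglyMeasurable e volume := by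
    apply Continuous.aestronglyMeasurable
    exact Complex.continuous_exp.comp (by continuity)
  have hebdd : ∀ ξ : ℝ, ‖e ξ‖ ≤ 1 := by
    intro ξ
    have : (2 * (π : ℂ) * (ξ : ℂ) * (t : ℂ) * Complex.I)
        = ((2 * π * ξ * t : ℝ) : ℂ) * Complex.I := by push_cast; ring
    rw [he]; simp only [this, norm_exp_I_eq_one]; exact le_refl 1
  have heP : Integrable (fun ξ => e ξ * P ξ) :=
    hPint.bdd_mul hemeas (Filter.Eventually.of_forall hebdd)
  have heN : Integrable (fun ξ => e ξ * N ξ) :=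
    hNint.bdd_mul hemeas (Filter.Eventually.of_forall hebdd)
  -- Fourier inversion
  have hc2 : Continuous (fun t : ℝ => (f t : ℂ)) := Complex.continuous_ofReal.comp hcont
  have hinv : (f t : ℂ) = 𝓕⁻ F t :=
    (congrFun (hc2.fourierInv_fourier_eq hint.ofReal hFint) t).symm
  -- a.e. decomposition of F into positive and negative band parts
  have hFPN : ∀ᵐ ξ : ℝ, F ξ = P ξ + N ξ := by
    have h0 : ∀ᵐ ξ : ℝ, ξ ≠ 0 := by
      refine ae_iff.mpr ?_
      simp
    filter_upwards [h0] with ξ hξ0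
    by_cases hp : ξ ∈ Set.Icc f₁ f₂
    · have hn : ξ ∉ Set.Icc (-f₂) (-f₁) := by
        rintro ⟨h1, h2⟩
        exact hξ0 (le_antisymm (by linarith [hp.1]) (by linarith [hp.1]))
      rw [hP, hN, Set.indicator_of_mem hp, Set.indicator_of_notMem hn, add_zero]
    · by_cases hn : ξ ∈ Set.Icc (-f₂) (-f₁)
      · rw [hP, hN, Set.indicator_of_mem hn, Set.indicator_of_notMem hp, zero_add]
      · have hFz : F ξ = 0 := by
          apply hband
          by_contra hcon
          push_neg at hcon
          obtain ⟨h1, h2⟩ := hcon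
          rcases le_or_gt 0 ξ with hξ | hξ
          · rw [_root_.abs_of_nonneg hξ] at h1 h2; exact hp ⟨h1, h2⟩
          · rw [_root_.abs_of_neg hξ] at h1 h2; exact hn ⟨by linarith, by linarith⟩
        rw [hP, hN, Set.indicator_of_notMem hp, Set.indicator_of_notMem hn, hFz, add_zero]
  -- split the inversion integral
  have hsplit : 𝓕⁻ F t = (∫ ξ : ℝ, e ξ * P ξ) + ∫ ξ : ℝ, e ξ * N ξ := by
    rw [fourierInv_apply' F t, ← integral_add heP heN]
    apply integral_congr_ae
    filter_upwards [hFPN] with ξ hξ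
    show e ξ * F ξ = e ξ * P ξ + e ξ * N ξ
    rw [hξ, mul_add]
  -- negative part is the conjugate of the positive part
  have hNP : ∀ ξ : ℝ, N ξ = (starRingEnd ℂ) (P (-ξ)) := by
    intro ξ
    by_cases h : ξ ∈ Set.Icc (-f₂) (-f₁)
    · have h' : -ξ ∈ Set.Icc f₁ f₂ := ⟨by linarith [h.2], by linarith [h.1]⟩
      rw [hN, Set.indicator_of_mem h, hP, Set.indicator_of_mem h', hF, fourier_real_conj]
    · have h' : -ξ ∉ Set.Icc f₁ f₂ := by
        intro hx; exact h ⟨by linarith [hx.2], by linarith [hx.1]⟩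
      rw [hN, Set.indicator_of_notMem h, hP, Set.indicator_of_notMem h', map_zero]
  have hEconj : ∀ ξ : ℝ, (starRingEnd ℂ) (e (-ξ)) = e ξ := by
    intro ξ
    show (starRingEnd ℂ) (Complex.exp (2 * π * ((-ξ : ℝ) : ℂ) * t * Complex.I))
      = Complex.exp (2 * π * ξ * t * Complex.I)
    rw [← Complex.exp_conj]
    congr 1
    simp only [map_mul, Complex.conj_I, Complex.conj_ofReal, map_ofNat]
    push_cast; ring
  have hconjE : ∀ ξ : ℝ, e ξ * (starRingEnd ℂ) (P (-ξ))
      = (starRingEnd ℂ) (e (-ξ) * P (-ξ)) := by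
    intro ξ
    rw [map_mul, hEconj ξ]
  have hNconj : (∫ ξ : ℝ, e ξ * N ξ) = (starRingEnd ℂ) (∫ ξ : ℝ, e ξ * P ξ) := by
    calc (∫ ξ : ℝ, e ξ * N ξ)
        = ∫ ξ : ℝ, (starRingEnd ℂ) ((fun x => e x * P x) (-ξ)) := by
          congr 1; ext ξ; rw [hNP ξ, hconjE ξ]
      _ = (starRingEnd ℂ) (∫ ξ : ℝ, (fun x => e x * P x) (-ξ)) := integral_conj
      _ = (starRingEnd ℂ) (∫ ξ : ℝ, e ξ * P ξ) := by
          rw [integral_neg_eq_self (fun x => e x * P x) volume]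
  -- relating P and G via translation
  have hmem : ∀ ν : ℝ, (ν + fc ∈ Set.Icc f₁ f₂) ↔ ν ∈ Set.Icc (-B2) B2 := by
    intro ν
    rw [Set.mem_Icc, Set.mem_Icc, hfc, hB2]
    constructor <;> rintro ⟨h1, h2⟩ <;> constructor <;> linarith
  have hPG : ∀ ν : ℝ, 2 * P (ν + fc) = G ν := by
    intro ν
    by_cases h : ν ∈ Set.Icc (-B2) B2
    · rw [hG, Set.indicator_of_mem h, hP, Set.indicator_of_mem ((hmem ν).mpr h)]
    · rw [hG, Set.indicator_of_notMem h, hP,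
        Set.indicator_of_notMem (fun hx => h ((hmem ν).mp hx)), mul_zero]
  set c : ℂ := Complex.exp (2 * π * Complex.I * (fc : ℂ) * (t : ℂ)) with hc
  have hshift : (∫ ξ : ℝ, e ξ * P ξ) = c * ∫ ν : ℝ, e ν * P (ν + fc) := by
    rw [← integral_add_right_eq_self (fun ξ => e ξ * P ξ) fc, ← integral_const_mul]
    congr 1; ext ν
    simp only [he]
    rw [← mul_assoc, hc, ← Complex.exp_add]
    congr 2
    push_cast; ring
  have htwo : (2 : ℂ) * ∫ ν : ℝ, e ν * P (ν + fc) = 𝓕⁻ G t := by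
    rw [fourierInv_apply' G t, ← integral_const_mul]
    congr 1; ext ν
    rw [← hPG ν]
    show (2 : ℂ) * (e ν * P (ν + fc)) = e ν * (2 * P (ν + fc))
    ring
  -- put everything together
  have hfinal : (f t : ℂ) = (∫ ξ : ℝ, e ξ * P ξ) + (starRingEnd ℂ) (∫ ξ : ℝ, e ξ * P ξ) := by
    rw [hinv, hsplit, hNconj]
  have hre : f t = (2 * ∫ ξ : ℝ, e ξ * P ξ).re := by
    have := congrArg Complex.re hfinal
    rw [Complex.add_re, Complex.conj_re, Complex.ofReal_re] at this
    rw [this]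
    simp [Complex.mul_re]
    ring
  rw [hre]
  have : (2 : ℂ) * ∫ ξ : ℝ, e ξ * P ξ = 𝓕⁻ G t * c := by
    rw [hshift, ← mul_assoc, mul_comm (2:ℂ) c, mul_assoc, htwo, mul_comm]
  rw [this, hc, hfc]
end

section
/- Kotel'nikov representation theorem (envelope–phase form). Let 0 ≤ f₁ < f₂ and let f : ℝ → ℝ be continuous and integrable, with integrable Fourier transform 𝓕f, and suppose that 𝓕f(ξ) = 0 whenever |ξ| < f₁ or |ξ| > f₂. Then there exist functions g : ℝ → ℝ with g ≥ 0 and θ : ℝ → ℝ such that f(t) = g(t) · cos( 2π·((f₁+f₂)/2)·t + θ(t) ) for every t ∈ ℝ, where moreover g(t) = |S(t)| and θ(t) = arg(S(t)) for a function S : ℝ → ℂ that is the inverse Fourier integral of an integrable function vanishing outside [−(f₂−f₁)/2, (f₂−f₁)/2]. -/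
open MeasureTheory Real Complex
open scoped FourierTransform

/-- **Kotel'nikov representation theorem (envelope–phase form).**
A real bandpass signal confined to the band `[f₁, f₂]` admits a representation
`f(t) = g(t) · cos(2π·((f₁+f₂)/2)·t + θ(t))` where `g ≥ 0` and `θ` are the modulus and
argument of a complex baseband signal `S`, i.e. the inverse Fourier integral of an integrable
function supported in `[-(f₂-f₁)/2, (f₂-f₁)/2]`. -/
theorem kotelnikov_envelope_phase
    (f₁ f₂ : ℝ) (hf₁ : 0 ≤ f₁) (h₁₂ : f₁ < f₂)
    (f : ℝ → ℝ) (hcont : Continuous f)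
    (hint : Integrable f)
    (hFint : Integrable (𝓕 (fun t : ℝ => (f t : ℂ))))
    (hband : ∀ ξ : ℝ, (|ξ| < f₁ ∨ |ξ| > f₂) → 𝓕 (fun t : ℝ => (f t : ℂ)) ξ = 0) :
    ∃ (g θ : ℝ → ℝ) (S : ℝ → ℂ),
      (∀ t : ℝ, 0 ≤ g t) ∧
      (∃ G : ℝ → ℂ, Integrable G ∧
        (∀ ξ : ℝ, ξ ∉ Set.Icc (-((f₂ - f₁) / 2)) ((f₂ - f₁) / 2) → G ξ = 0) ∧
        S = 𝓕⁻ G) ∧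
      (∀ t : ℝ, g t = ‖S t‖) ∧
      (∀ t : ℝ, θ t = Complex.arg (S t)) ∧
      (∀ t : ℝ, f t = g t * Real.cos (2 * Real.pi * ((f₁ + f₂) / 2) * t + θ t)) := by
  set F : ℝ → ℂ := 𝓕 (fun t : ℝ => (f t : ℂ)) with hFdef
  set f₀ : ℝ := (f₁ + f₂) / 2 with hf₀
  set b : ℝ := (f₂ - f₁) / 2 with hbdef
  set G : ℝ → ℂ := (Set.Icc (-b) b).indicator (fun ξ => 2 * F (ξ + f₀)) with hGdef
  set S : ℝ → ℂ := 𝓕⁻ G with hSdef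
  have hGint : Integrable G :=
    Integrable.indicator ((hFint.comp_add_right f₀).const_mul 2) measurableSet_Icc
  have hce : ∀ c : ℝ, (starRingEnd ℂ) (Complex.exp (↑c * Complex.I))
      = Complex.exp (↑(-c) * Complex.I) := by
    intro c
    rw [← Complex.exp_conj]
    congr 1
    simp [Complex.conj_I]
  have hconjF : ∀ ξ : ℝ, (starRingEnd ℂ) (F ξ) = F (-ξ) := by
    intro ξ
    rw [hFdef, Real.fourier_real_eq_integral_exp_smul,
      Real.fourier_real_eq_integral_exp_smul, ← integral_conj]
    congr 1
    ext v
    rw [smul_eq_mul, smul_eq_mul, map_mul, hce, Complex.conj_ofReal]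
    congr 3
    ring
  have hInv : ∀ t : ℝ, 𝓕⁻ F t = (f t : ℂ) := by
    intro t
    have hc2 : Continuous fun t : ℝ => (f t : ℂ) := Complex.continuous_ofReal.comp hcont
    rw [hFdef, hc2.fourierInv_fourier_eq hint.ofReal hFint]
  refine ⟨fun t => ‖S t‖, fun t => Complex.arg (S t), S,
    fun t => norm_nonneg _, ⟨G, hGint, ?_, hSdef⟩, fun t => rfl, fun t => rfl, ?_⟩
  · intro ξ hξ
    exact Set.indicator_of_notMem hξ _
  · intro t
    set φ : ℝ → ℂ := fun η => Complex.exp (↑(2 * π * (η * t)) * Complex.I) * F η with hφdef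
    have hφint : Integrable φ := by
      refine hFint.bdd_mul (c := 1) ?_ (Filter.Eventually.of_forall fun η => ?_)
      · exact (Complex.continuous_exp.comp
          ((Complex.continuous_ofReal.comp (by continuity)).mul continuous_const)).aestronglyMeasurable
      · rw [Complex.norm_exp_ofReal_mul_I]
    have hφc : ∀ η : ℝ, (starRingEnd ℂ) (φ η) = φ (-η) := by
      intro η
      rw [hφdef]
      simp only [map_mul, hce, hconjF]
      congr 3
      ring
    set P : ℂ := ∫ η in Set.Icc f₁ f₂, φ η with hPdef
    -- N = conj P
    have hN : ∫ η in Set.Icc (-f₂) (-f₁), φ η = (starRingEnd ℂ) P := by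
      rw [hPdef, ← integral_conj, ← MeasureTheory.integral_indicator measurableSet_Icc,
        ← MeasureTheory.integral_indicator measurableSet_Icc,
        ← integral_neg_eq_self (fun η => (Set.Icc (-f₂) (-f₁)).indicator φ η) volume]
      congr 1
      ext η
      by_cases h : η ∈ Set.Icc f₁ f₂
      · have h' : -η ∈ Set.Icc (-f₂) (-f₁) := ⟨neg_le_neg h.2, neg_le_neg h.1⟩
        rw [Set.indicator_of_mem h', Set.indicator_of_mem h, hφc]
      · have h' : -η ∉ Set.Icc (-f₂) (-f₁) := by
          simp only [Set.mem_Icc, not_and_or, not_le] at h ⊢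
          rcases h with h | h
          · right; linarith
          · left; linarith
        rw [Set.indicator_of_notMem h', Set.indicator_of_notMem h]
    -- f t = P + conj P
    have hsplit : (f t : ℂ) = P + (starRingEnd ℂ) P := by
      have h0 : (f t : ℂ) = ∫ η, φ η := by
        rw [← hInv t, Real.fourierInv_eq']
        congr 1
        ext v
        simp only [RCLike.inner_apply, conj_trivial, smul_eq_mul, hφdef]
        rw [mul_comm t v]
      have hA : ∀ η : ℝ, η ∉ (Set.Icc f₁ f₂ ∪ Set.Icc (-f₂) (-f₁)) → φ η = 0 := by
        intro η hη
        have hb2 : |η| < f₁ ∨ |η| > f₂ := by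
          by_contra hc
          push_neg at hc
          apply hη
          rcases abs_cases η with ⟨he, hpos⟩ | ⟨he, hneg⟩
          · exact Or.inl ⟨by rw [← he]; exact hc.1, by rw [← he]; exact hc.2⟩
          · exact Or.inr ⟨by linarith [hc.2, he.symm.le], by linarith [hc.1, he.symm.le]⟩
        rw [hφdef]
        simp [hband η hb2]
      have hdisj : AEDisjoint volume (Set.Icc f₁ f₂) (Set.Icc (-f₂) (-f₁)) := by
        have hsub : Set.Icc f₁ f₂ ∩ Set.Icc (-f₂) (-f₁) ⊆ {(0:ℝ)} := by
          rintro x ⟨⟨ha, _⟩, ⟨_, hb'⟩⟩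
          have : x = 0 := le_antisymm (hb'.trans (by linarith)) (hf₁.trans ha)
          simp [this]
        exact measure_mono_null hsub (measure_singleton 0)
      rw [h0, ← setIntegral_eq_integral_of_forall_compl_eq_zero hA,
        integral_union_ae hdisj measurableSet_Icc.nullMeasurableSet
          hφint.integrableOn hφint.integrableOn, hN]
    -- S t * e^{2πi f₀ t} = 2 P
    have hS : S t * Complex.exp (↑(2 * π * (f₀ * t)) * Complex.I) = 2 * P := by
      rw [hSdef, Real.fourierInv_eq']
      simp only [RCLike.inner_apply, conj_trivial, smul_eq_mul]
      rw [← integral_mul_const]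
      have h2P : (2:ℂ) * P = ∫ ξ : ℝ,
          ((Set.Icc f₁ f₂).indicator (fun η => 2 * φ η)) (ξ + f₀) := by
        rw [integral_add_right_eq_self (fun ξ => ((Set.Icc f₁ f₂).indicator (fun η => 2 * φ η)) ξ) f₀,
          MeasureTheory.integral_indicator measurableSet_Icc, integral_const_mul, hPdef]
      rw [h2P]
      congr 1
      ext ξ
      rw [hGdef]
      by_cases h : ξ ∈ Set.Icc (-b) b
      · have h' : ξ + f₀ ∈ Set.Icc f₁ f₂ := by
          simp only [Set.mem_Icc, hbdef, hf₀] at h ⊢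
          constructor <;> linarith [h.1, h.2]
        simp only [Set.indicator_of_mem h, Set.indicator_of_mem h', hφdef]
        have hee : Complex.exp (↑(2 * π * (ξ * t)) * Complex.I)
            * Complex.exp (↑(2 * π * (f₀ * t)) * Complex.I)
            = Complex.exp (↑(2 * π * ((ξ + f₀) * t)) * Complex.I) := by
          rw [← Complex.exp_add]
          congr 1
          push_cast
          ring
        rw [← hee]
        ring
      · have h' : ξ + f₀ ∉ Set.Icc f₁ f₂ := by
          simp only [Set.mem_Icc, hbdef, hf₀, not_and_or, not_le] at h ⊢
          rcases h with h | h
          · left; linarith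
          · right; linarith
        rw [Set.indicator_of_notMem h, Set.indicator_of_notMem h']
        ring
    -- conclude
    have hft : f t = (S t * Complex.exp (↑(2 * π * (f₀ * t)) * Complex.I)).re := by
      have h3 := congrArg Complex.re hsplit
      simp only [Complex.ofReal_re, Complex.add_re, Complex.conj_re] at h3
      rw [hS]
      simp only [Complex.mul_re, Complex.ofReal_re, Complex.ofReal_im]
      norm_num
      linarith
    rw [hft]
    conv_lhs => rw [← Complex.norm_mul_exp_arg_mul_I (S t)]
    rw [mul_assoc, ← Complex.exp_add,
      show (↑(Complex.arg (S t)) * Complex.I + ↑(2 * π * (f₀ * t)) * Complex.I)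
        = ↑(Complex.arg (S t) + 2 * π * (f₀ * t)) * Complex.I by push_cast; ring,
      Complex.re_ofReal_mul, Complex.exp_ofReal_mul_I_re]
    congr 1
    ring
end

section
/- The demodulated Meyer spectrum reproduces the Meyer scaling-function spectrum (Fig. 4). Let ν and M be as follows: ν(x) = 0 for x ≤ 0, ν(x) = x for 0 ≤ x ≤ 1, ν(x) = 1 for x ≥ 1; M(w) = (1/√(2π))·sin( (π/2)·ν(3|w|/(2π) − 1) ) for 2π/3 ≤ |w| ≤ 4π/3, M(w) = (1/√(2π))·cos( (π/2)·ν(3|w|/(4π) − 1) ) for 4π/3 ≤ |w| ≤ 8π/3, M(w) = 0 otherwise. Let Φ : ℝ → ℝ be the magnitude of the Meyer scaling-function spectrum: Φ(w) = 1/√(2π) for |w| ≤ 2π/3, Φ(w) = (1/√(2π))·cos( (π/2)·ν(3|w|/(2π) − 1) ) for 2π/3 ≤ |w| ≤ 4π/3, and Φ(w) = 0 otherwise. Then for every w with |w| ≤ 8π/3, one has M(w − 2π)² + M(w + 2π)² = Φ(w)²: shifting the two Meyer spectral lobes to baseband by the carrier frequency 2π rad/s and combining them in quadrature yields exactly the Meyer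 scaling-function spectrum. -/
open Real

/-- The standard Meyer ramp: `ν(x) = 0` for `x ≤ 0`, `ν(x) = x` for `0 ≤ x ≤ 1`,
`ν(x) = 1` for `x ≥ 1`. -/
noncomputable def meyerNu (x : ℝ) : ℝ :=
  if x ≤ 0 then 0 else if x ≤ 1 then x else 1

/-- The magnitude `M` of the Meyer wavelet spectrum (in angular frequency `w`, rad/s):
`M(w) = (1/√(2π))·sin((π/2)·ν(3|w|/(2π) − 1))` for `2π/3 ≤ |w| ≤ 4π/3`,
`M(w) = (1/√(2π))·cos((π/2)·ν(3|w|/(4π) − 1))` for `4π/3 ≤ |w| ≤ 8π/3`,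
and `M(w) = 0` otherwise (the two branches agree at `|w| = 4π/3`). -/
noncomputable def meyerMag (w : ℝ) : ℝ :=
  if 2 * π / 3 ≤ |w| ∧ |w| ≤ 4 * π / 3 then
    (1 / Real.sqrt (2 * π)) * Real.sin (π / 2 * meyerNu (3 * |w| / (2 * π) - 1))
  else if 4 * π / 3 ≤ |w| ∧ |w| ≤ 8 * π / 3 then
    (1 / Real.sqrt (2 * π)) * Real.cos (π / 2 * meyerNu (3 * |w| / (4 * π) - 1))
  else 0

/-- The magnitude `Φ` of the Meyer scaling-function spectrum:
`Φ(w) = 1/√(2π)` for `|w| ≤ 2π/3`,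
`Φ(w) = (1/√(2π))·cos((π/2)·ν(3|w|/(2π) − 1))` for `2π/3 ≤ |w| ≤ 4π/3`,
and `Φ(w) = 0` otherwise. -/
noncomputable def meyerScalingMag (w : ℝ) : ℝ :=
  if |w| ≤ 2 * π / 3 then 1 / Real.sqrt (2 * π)
  else if |w| ≤ 4 * π / 3 then
    (1 / Real.sqrt (2 * π)) * Real.cos (π / 2 * meyerNu (3 * |w| / (2 * π) - 1))
  else 0

lemma meyerNu_eval {x : ℝ} (h0 : 0 ≤ x) (h1 : x ≤ 1) : meyerNu x = x := by
  unfold meyerNu; split_ifs <;> linarith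

lemma meyerMag_plus {w : ℝ} (h : 2 * π / 3 ≤ w) : meyerMag (w + 2 * π) = 0 := by
  have hπ : (0:ℝ) < π := Real.pi_pos
  have habs : |w + 2*π| = w + 2*π := abs_of_nonneg (by linarith)
  rw [meyerMag, habs]
  rw [if_neg (by push_neg; intro h1; linarith)]
  by_cases h8 : w + 2*π ≤ 8*π/3
  · rw [if_pos ⟨by linarith, h8⟩]
    have harg : 3 * (w + 2*π) / (4 * π) - 1 = 1 := by
      have hw : w = 2*π/3 := by linarith
      field_simp [hw]; linarith
    rw [harg, meyerNu_eval (by norm_num) (le_refl 1), mul_one, Real.cos_pi_div_two, mul_zero]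
  · rw [if_neg (by push_neg; intro h1; linarith)]

lemma meyer_key (w : ℝ) (h0 : 0 ≤ w) (h8 : w ≤ 8 * π / 3) :
    meyerMag (w - 2 * π) ^ 2 + meyerMag (w + 2 * π) ^ 2 = meyerScalingMag w ^ 2 := by
  have hπ : (0:ℝ) < π := Real.pi_pos
  have h2π : (0:ℝ) < 2*π := by linarith
  have hs : Real.sqrt (2*π) ^ 2 = 2*π := Real.sq_sqrt (by linarith)
  have habsw : |w| = w := abs_of_nonneg h0
  rcases lt_or_ge w (2*π/3) with hA | hge
  · -- Region A : 0 ≤ w < 2π/3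
    have habs2 : |w - 2*π| = 2*π - w := by rw [abs_sub_comm, abs_of_nonneg (by linarith)]
    have e1 : meyerMag (w - 2*π)
        = (1 / Real.sqrt (2*π)) * Real.cos (π/2 * (3 * (2*π - w) / (4*π) - 1)) := by
      rw [meyerMag, habs2, if_neg (by push_neg; intro h1; linarith),
        if_pos ⟨by linarith, by linarith⟩,
        meyerNu_eval (by rw [sub_nonneg, le_div_iff₀ (by linarith : (0:ℝ) < 4*π)]; linarith)
          (by rw [sub_le_iff_le_add, div_le_iff₀ (by linarith : (0:ℝ) < 4*π)]; linarith)]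
    have e2 : meyerMag (w + 2*π)
        = (1 / Real.sqrt (2*π)) * Real.cos (π/2 * (3 * (w + 2*π) / (4*π) - 1)) := by
      have habs1 : |w + 2*π| = w + 2*π := abs_of_nonneg (by linarith)
      rw [meyerMag, habs1, if_neg (by push_neg; intro h1; linarith),
        if_pos ⟨by linarith, by linarith⟩,
        meyerNu_eval (by rw [sub_nonneg, le_div_iff₀ (by linarith : (0:ℝ) < 4*π)]; linarith)
          (by rw [sub_le_iff_le_add, div_le_iff₀ (by linarith : (0:ℝ) < 4*π)]; linarith)]
    have e3 : meyerScalingMag w = 1 / Real.sqrt (2*π) := by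
      rw [meyerScalingMag, habsw, if_pos (by linarith)]
    rw [e1, e2, e3]
    have hang : π/2 * (3 * (2*π - w) / (4*π) - 1)
        = π/2 - π/2 * (3 * (w + 2*π) / (4*π) - 1) := by
      field_simp; ring
    rw [hang, Real.cos_pi_div_two_sub]
    have := Real.sin_sq_add_cos_sq (π/2 * (3 * (w + 2*π) / (4*π) - 1))
    nlinarith [this, hs]
  · rcases eq_or_lt_of_le hge with hB0 | hB
    · -- w = 2π/3
      have habs2 : |w - 2*π| = 2*π - w := by rw [abs_sub_comm, abs_of_nonneg (by linarith)]
      have e1 : meyerMag (w - 2*π) = 1 / Real.sqrt (2*π) := by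
        rw [meyerMag, habs2, if_pos ⟨by linarith, by linarith⟩]
        have harg : 3 * (2*π - w) / (2*π) - 1 = 1 := by field_simp [← hB0]; linarith
        rw [harg, meyerNu_eval (by norm_num) (le_refl 1), mul_one, Real.sin_pi_div_two, mul_one]
      have e3 : meyerScalingMag w = 1 / Real.sqrt (2*π) := by
        rw [meyerScalingMag, habsw, if_pos (by linarith)]
      rw [e1, meyerMag_plus hge, e3]; ring
    rcases le_or_gt w (4*π/3) with hC | hC
    · -- Region B : 2π/3 < w ≤ 4π/3
      have habs2 : |w - 2*π| = 2*π - w := by rw [abs_sub_comm, abs_of_nonneg (by linarith)]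
      have e1 : meyerMag (w - 2*π)
          = (1 / Real.sqrt (2*π)) * Real.sin (π/2 * (3 * (2*π - w) / (2*π) - 1)) := by
        rw [meyerMag, habs2, if_pos ⟨by linarith, by linarith⟩,
          meyerNu_eval (by rw [sub_nonneg, le_div_iff₀ h2π]; linarith)
            (by rw [sub_le_iff_le_add, div_le_iff₀ h2π]; linarith)]
      have e3 : meyerScalingMag w
          = (1 / Real.sqrt (2*π)) * Real.cos (π/2 * (3 * w / (2*π) - 1)) := by
        rw [meyerScalingMag, habsw, if_neg (by push_neg; linarith), if_pos (by linarith),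
          meyerNu_eval (by rw [sub_nonneg, le_div_iff₀ h2π]; linarith)
            (by rw [sub_le_iff_le_add, div_le_iff₀ h2π]; linarith)]
      rw [e1, meyerMag_plus hge, e3]
      have hang : π/2 * (3 * (2*π - w) / (2*π) - 1) = π/2 - π/2 * (3 * w / (2*π) - 1) := by
        field_simp; ring
      rw [hang, Real.sin_pi_div_two_sub]; ring
    · -- Region C : 4π/3 < w ≤ 8π/3
      have habs2 : |w - 2*π| ≤ 2*π/3 := abs_le.mpr ⟨by linarith, by linarith⟩
      have e1 : meyerMag (w - 2*π) = 0 := by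
        rw [meyerMag]
        by_cases hc : 2*π/3 ≤ |w - 2*π| ∧ |w - 2*π| ≤ 4*π/3
        · rw [if_pos hc]
          have habse : |w - 2*π| = 2*π/3 := le_antisymm habs2 hc.1
          have harg : 3 * |w - 2*π| / (2*π) - 1 = 0 := by rw [habse]; field_simp; ring
          rw [harg, meyerNu_eval (le_refl 0) (by norm_num), mul_zero, Real.sin_zero, mul_zero]
        · rw [if_neg hc, if_neg (by push_neg; intro h1; linarith)]
      have e3 : meyerScalingMag w = 0 := by
        rw [meyerScalingMag, habsw, if_neg (by push_neg; linarith),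
          if_neg (by push_neg; linarith)]
      rw [e1, meyerMag_plus (by linarith), e3]; ring

/-- **The demodulated Meyer spectrum reproduces the Meyer scaling-function spectrum** (Fig. 4).
Shifting the two Meyer spectral lobes to baseband by the carrier `2π` rad/s and combining
them in quadrature yields exactly the Meyer scaling-function spectrum:
`M(w − 2π)² + M(w + 2π)² = Φ(w)²` for all `|w| ≤ 8π/3`. -/
theorem meyer_demodulation_scaling_spectrum :
    ∀ w : ℝ, |w| ≤ 8 * π / 3 →
      meyerMag (w - 2 * π) ^ 2 + meyerMag (w + 2 * π) ^ 2 = meyerScalingMag w ^ 2 := by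
  have hMeven : ∀ x : ℝ, meyerMag (-x) = meyerMag x := by
    intro x; rw [meyerMag, meyerMag, abs_neg]
  have hSeven : ∀ x : ℝ, meyerScalingMag (-x) = meyerScalingMag x := by
    intro x; rw [meyerScalingMag, meyerScalingMag, abs_neg]
  intro w hw
  rcases le_total 0 w with h | h
  · exact meyer_key w h (by rwa [abs_of_nonneg h] at hw)
  · have key := meyer_key (-w) (by linarith) (by rwa [abs_of_nonpos h] at hw)
    rw [show -w - 2*π = -(w + 2*π) from by ring, show -w + 2*π = -(w - 2*π) from by ring,
      hMeven, hMeven, hSeven] at key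
    linarith [key]
end
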